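/- arXiv:1105.0201 — 2 statements merged into one kernel-verified Lean document; each statement's English description precedes it below -/
import Mathlib

section
/- Let V be an n-dimensional real vector space and g a symmetric bilinear form on V, and let (e_a)_{a=1}^n be a g-orthogonal basis of V (g(e_a,e_b) = 0 for a ≠ b). Then the family (♭e_a) indexed by those a with g(e_a,e_a) ≠ 0 is a basis of Im ♭, and for such indices a, b one has g•(♭e_a, ♭e_b) = g(e_a, e_b). In particular, if among the diagonal values g(e_a,e_a) exactly r are zero, s are negative and t are positive, then g• is diagonalized by this basis of Im ♭ with exactly s negative and t positive diagonal entries (signature (0,s,t)). -/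
/-- The radical-annihilator inner product `g•` on `Im ♭ = range g`:
`g•(♭u, ♭v) := g(u,v)`, computed via chosen representatives. -/
noncomputable def radAnnInner {V : Type*} [AddCommGroup V] [Module ℝ V]
    (g : V →ₗ[ℝ] V →ₗ[ℝ] ℝ) (ω τ : LinearMap.range g) : ℝ :=
  g (LinearMap.mem_range.mp ω.2).choose (LinearMap.mem_range.mp τ.2).choose

lemma radAnnInner_eq {V : Type*} [AddCommGroup V] [Module ℝ V]
    (g : V →ₗ[ℝ] V →ₗ[ℝ] ℝ) (hsymm : ∀ u v : V, g u v = g v u) (u v : V) :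
    radAnnInner g ⟨g u, LinearMap.mem_range_self g u⟩ ⟨g v, LinearMap.mem_range_self g v⟩
      = g u v := by
  unfold radAnnInner
  have h1 : g (LinearMap.mem_range.mp (LinearMap.mem_range_self g u)).choose = g u :=
    (LinearMap.mem_range.mp (LinearMap.mem_range_self g u)).choose_spec
  have h2 : g (LinearMap.mem_range.mp (LinearMap.mem_range_self g v)).choose = g v :=
    (LinearMap.mem_range.mp (LinearMap.mem_range_self g v)).choose_spec
  calc g (LinearMap.mem_range.mp (LinearMap.mem_range_self g u)).choose
        (LinearMap.mem_range.mp (LinearMap.mem_range_self g v)).choose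
      = g (LinearMap.mem_range.mp (LinearMap.mem_range_self g v)).choose
        (LinearMap.mem_range.mp (LinearMap.mem_range_self g u)).choose := hsymm _ _
    _ = g v (LinearMap.mem_range.mp (LinearMap.mem_range_self g u)).choose := by rw [h2]
    _ = g (LinearMap.mem_range.mp (LinearMap.mem_range_self g u)).choose v := hsymm _ _
    _ = g u v := by rw [h1]


open scoped Classical in
/-- given a `g`-orthogonal basis `(e_a)` of `V`, the family `(♭e_a)` over
the indices `a` with `g(e_a,e_a) ≠ 0` is a basis of `Im ♭` (linearly independent and
spanning), on which `g•(♭e_a, ♭e_b) = g(e_a, e_b)`; thus this basis diagonalizes `g•`,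
and if among the diagonal values `g(e_a,e_a)` exactly `r` are zero, `s` are negative and
`t` are positive, then `g•` has exactly `s` negative and `t` positive diagonal entries
(signature `(0,s,t)`). -/
theorem radAnnInner_basis_signature {V : Type*} [AddCommGroup V] [Module ℝ V]
    [FiniteDimensional ℝ V]
    (g : V →ₗ[ℝ] V →ₗ[ℝ] ℝ) (hsymm : ∀ u v : V, g u v = g v u)
    {n : ℕ} (e : Module.Basis (Fin n) ℝ V)
    (hortho : ∀ a b : Fin n, a ≠ b → g (e a) (e b) = 0)
    (r s t : ℕ)
    (hr : r = (Finset.univ.filter (fun a : Fin n => g (e a) (e a) = 0)).card)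
    (hs : s = (Finset.univ.filter (fun a : Fin n => g (e a) (e a) < 0)).card)
    (ht : t = (Finset.univ.filter (fun a : Fin n => 0 < g (e a) (e a))).card) :
    LinearIndependent ℝ (fun a : {a : Fin n // g (e a) (e a) ≠ 0} =>
      (⟨g (e a.1), LinearMap.mem_range_self g (e a.1)⟩ : LinearMap.range g)) ∧
    Submodule.span ℝ (Set.range (fun a : {a : Fin n // g (e a) (e a) ≠ 0} =>
      (⟨g (e a.1), LinearMap.mem_range_self g (e a.1)⟩ : LinearMap.range g))) = ⊤ ∧
    (∀ a b : {a : Fin n // g (e a) (e a) ≠ 0},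
      radAnnInner g ⟨g (e a.1), LinearMap.mem_range_self g (e a.1)⟩
        ⟨g (e b.1), LinearMap.mem_range_self g (e b.1)⟩ = g (e a.1) (e b.1)) ∧
    (∀ a b : {a : Fin n // g (e a) (e a) ≠ 0}, a ≠ b →
      radAnnInner g ⟨g (e a.1), LinearMap.mem_range_self g (e a.1)⟩
        ⟨g (e b.1), LinearMap.mem_range_self g (e b.1)⟩ = 0) ∧
    (Finset.univ.filter (fun a : {a : Fin n // g (e a) (e a) ≠ 0} =>
      radAnnInner g ⟨g (e a.1), LinearMap.mem_range_self g (e a.1)⟩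
        ⟨g (e a.1), LinearMap.mem_range_self g (e a.1)⟩ < 0)).card = s ∧
    (Finset.univ.filter (fun a : {a : Fin n // g (e a) (e a) ≠ 0} =>
      0 < radAnnInner g ⟨g (e a.1), LinearMap.mem_range_self g (e a.1)⟩
        ⟨g (e a.1), LinearMap.mem_range_self g (e a.1)⟩)).card = t := by
  have hrad : ∀ u v : V,
      radAnnInner g ⟨g u, LinearMap.mem_range_self g u⟩ ⟨g v, LinearMap.mem_range_self g v⟩
        = g u v := radAnnInner_eq g hsymm
  -- g (e a) = 0 when diagonal entry is 0
  have hzero : ∀ a : Fin n, g (e a) (e a) = 0 → g (e a) = 0 := by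
    intro a ha
    apply e.ext
    intro b
    by_cases hab : a = b
    · subst hab; simpa using ha
    · simpa using hortho a b hab
  -- linear independence of the underlying family in V →ₗ ℝ
  have hind' : LinearIndependent ℝ (fun a : {a : Fin n // g (e a) (e a) ≠ 0} => g (e a.1)) := by
    rw [Fintype.linearIndependent_iff]
    intro c hc b
    have hb := congrArg (fun f : V →ₗ[ℝ] ℝ => f (e b.1)) hc
    simp only [LinearMap.coe_sum, Finset.sum_apply, LinearMap.smul_apply, smul_eq_mul,
      LinearMap.zero_apply] at hb
    rw [Finset.sum_eq_single b] at hb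
    · exact (mul_eq_zero.mp hb).resolve_right b.2
    · intro a _ hab
      rw [hortho a.1 b.1 (fun h => hab (Subtype.ext h)), mul_zero]
    · simp
  have hind : LinearIndependent ℝ (fun a : {a : Fin n // g (e a) (e a) ≠ 0} =>
      (⟨g (e a.1), LinearMap.mem_range_self g (e a.1)⟩ : LinearMap.range g)) := by
    apply LinearIndependent.of_comp (LinearMap.range g).subtype
    exact hind'
  -- spanning
  have hspan' : Submodule.span ℝ (Set.range (fun a : {a : Fin n // g (e a) (e a) ≠ 0} =>
      g (e a.1))) = LinearMap.range g := by
    apply le_antisymm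
    · rw [Submodule.span_le]
      rintro _ ⟨a, rfl⟩
      exact LinearMap.mem_range_self g (e a.1)
    · rintro _ ⟨v, rfl⟩
      have hv : g v = ∑ a : Fin n, e.repr v a • g (e a) := by
        conv_lhs => rw [← e.sum_repr v]
        simp only [map_sum, map_smul]
      rw [hv]
      apply Submodule.sum_mem
      intro a _
      by_cases ha : g (e a) (e a) = 0
      · rw [hzero a ha, smul_zero]; exact Submodule.zero_mem _
      · exact Submodule.smul_mem _ _ (Submodule.subset_span ⟨⟨a, ha⟩, rfl⟩)
  have hspan : Submodule.span ℝ (Set.range (fun a : {a : Fin n // g (e a) (e a) ≠ 0} =>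
      (⟨g (e a.1), LinearMap.mem_range_self g (e a.1)⟩ : LinearMap.range g))) = ⊤ := by
    apply Submodule.map_injective_of_injective (LinearMap.range g).injective_subtype
    rw [Submodule.map_span, Submodule.map_subtype_top]
    rw [← Set.range_comp]
    exact hspan'
  -- diagonal values
  have hdiag : ∀ a b : {a : Fin n // g (e a) (e a) ≠ 0},
      radAnnInner g ⟨g (e a.1), LinearMap.mem_range_self g (e a.1)⟩
        ⟨g (e b.1), LinearMap.mem_range_self g (e b.1)⟩ = g (e a.1) (e b.1) :=
    fun a b => hrad (e a.1) (e b.1)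
  -- counting helper
  have hcount : ∀ p : ℝ → Prop, (∀ x, p x → x ≠ 0) →
      (Finset.univ.filter (fun a : {a : Fin n // g (e a) (e a) ≠ 0} =>
        p (g (e a.1) (e a.1)))).card
      = (Finset.univ.filter (fun a : Fin n => p (g (e a) (e a)))).card := by
    intro p hp
    apply Finset.card_bij (fun a _ => a.1)
    · intro a ha
      simp only [Finset.mem_filter, Finset.mem_univ, true_and] at ha ⊢
      exact ha
    · intro a ha b hb hab
      exact Subtype.ext hab
    · intro b hb
      simp only [Finset.mem_filter, Finset.mem_univ, true_and] at hb
      exact ⟨⟨b, hp _ hb⟩, by simpa using hb, rfl⟩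
  refine ⟨hind, hspan, hdiag, ?_, ?_, ?_⟩
  · intro a b hab
    rw [hdiag a b]
    exact hortho a.1 b.1 (fun h => hab (Subtype.ext h))
  · simp only [hdiag]
    rw [hcount (fun x => x < 0) (fun x hx => ne_of_lt hx), hs]
  · simp only [hdiag]
    rw [hcount (fun x => 0 < x) (fun x hx => (ne_of_lt hx).symm), ht]
end

section
/- Let V be an n-dimensional real vector space, g a symmetric bilinear form on V, and (E_a)_{a=1}^n a g-orthogonal basis of V (g(E_a,E_b) = 0 for a ≠ b). Then for any ω₁, ω₂ ∈ Im ♭, the radical-annihilator inner product is computed by g•(ω₁, ω₂) = Σ_{a : g(E_a,E_a) ≠ 0} ω₁(E_a)·ω₂(E_a)/g(E_a,E_a); in particular the right-hand side is independent of the chosen g-orthogonal basis. -/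
open scoped Classical in
/-- in a `g`-orthogonal basis `(E_a)` of `V`, for any `ω₁, ω₂ ∈ Im ♭`,
`g•(ω₁, ω₂) = Σ_{a : g(E_a,E_a) ≠ 0} ω₁(E_a)·ω₂(E_a)/g(E_a,E_a)`;
in particular the right-hand side does not depend on the chosen orthogonal basis. -/
theorem radAnnInner_eq_sum_orthogonal_basis {V : Type*} [AddCommGroup V] [Module ℝ V]
    [FiniteDimensional ℝ V]
    (g : V →ₗ[ℝ] V →ₗ[ℝ] ℝ) (hsymm : ∀ u v : V, g u v = g v u)
    {n : ℕ} (E : Module.Basis (Fin n) ℝ V)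
    (hortho : ∀ a b : Fin n, a ≠ b → g (E a) (E b) = 0)
    (ω₁ ω₂ : LinearMap.range g) :
    radAnnInner g ω₁ ω₂ =
      ∑ a ∈ Finset.univ.filter (fun a : Fin n => g (E a) (E a) ≠ 0),
        (ω₁ : V →ₗ[ℝ] ℝ) (E a) * (ω₂ : V →ₗ[ℝ] ℝ) (E a) / g (E a) (E a) := by
  set u := (LinearMap.mem_range.mp ω₁.2).choose with hudef
  set v := (LinearMap.mem_range.mp ω₂.2).choose with hvdef
  have hu : g u = (ω₁ : V →ₗ[ℝ] ℝ) := (LinearMap.mem_range.mp ω₁.2).choose_spec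
  have hv : g v = (ω₂ : V →ₗ[ℝ] ℝ) := (LinearMap.mem_range.mp ω₂.2).choose_spec
  -- a basis vector with zero self-pairing is in the radical
  have hrad : ∀ a : Fin n, g (E a) (E a) = 0 → g (E a) = 0 := by
    intro a ha
    apply E.ext
    intro b
    by_cases hab : a = b
    · subst hab; simpa using ha
    · simpa using hortho a b hab
  -- expand v in the basis
  have hgu : ∀ a, g u (E a) = (ω₁ : V →ₗ[ℝ] ℝ) (E a) := fun a => by rw [hu]
  have hgv : ∀ a, g v (E a) = (ω₂ : V →ₗ[ℝ] ℝ) (E a) := fun a => by rw [hv]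
  have hrepr : ∀ a : Fin n, g (E a) (E a) ≠ 0 →
      E.repr v a = (ω₂ : V →ₗ[ℝ] ℝ) (E a) / g (E a) (E a) := by
    intro a ha
    have : g v (E a) = E.repr v a * g (E a) (E a) := by
      conv_lhs => rw [← E.sum_repr v]
      simp only [map_sum, map_smul, LinearMap.sum_apply, LinearMap.smul_apply, smul_eq_mul]
      exact Finset.sum_eq_single a
        (fun b _ hba => by rw [hortho b a hba, mul_zero])
        (fun h => absurd (Finset.mem_univ a) h)
    rw [← hgv a, this, mul_div_assoc, div_self ha, mul_one]
  have expand : g u v = ∑ a : Fin n, E.repr v a * g u (E a) := by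
    conv_lhs => rw [← E.sum_repr v]
    rw [map_sum]
    simp [smul_eq_mul]
  rw [radAnnInner, ← hudef, ← hvdef, expand]
  rw [← Finset.sum_filter_add_sum_filter_not Finset.univ
      (fun a : Fin n => g (E a) (E a) ≠ 0)]
  have hzero : ∑ a ∈ Finset.univ.filter (fun a : Fin n => ¬ g (E a) (E a) ≠ 0),
      E.repr v a * g u (E a) = 0 := by
    apply Finset.sum_eq_zero
    intro a ha
    have ha' : g (E a) (E a) = 0 := not_not.mp (Finset.mem_filter.mp ha).2
    have : g u (E a) = 0 := by
      rw [hsymm u (E a), hrad a ha']; rfl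
    rw [this, mul_zero]
  rw [hzero, add_zero]
  apply Finset.sum_congr rfl
  intro a ha
  have ha' : g (E a) (E a) ≠ 0 := (Finset.mem_filter.mp ha).2
  rw [hrepr a ha', hgu a]
  field_simp
end
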